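/- Let Λ, Λ̃ ⊆ ℝⁿ be full-rank lattices and let A ∈ O(n,ℝ) be an orthogonal linear map such that A maps the union of the Brillouin hyperplanes of Λ onto the union of the Brillouin hyperplanes of Λ̃, i.e. A(⋃_{λ ∈ Λ \ {0}} V_λ) = ⋃_{λ̃ ∈ Λ̃ \ {0}} V_{λ̃}. Then Λ̃ = A(Λ). -/

import Mathlib

open Set

noncomputable section

/-- Euclidean `n`-space, identified with the tangent plane at the basepoint of a flat torus. -/
abbrev Euc (n : ℕ) := EuclideanSpace ℝ (Fin n)

/-- `Λ ⊆ ℝⁿ` is a full-rank lattice: the image of `ℤⁿ` under some `L ∈ GL(n,ℝ)`,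
equivalently the set of integer combinations of a basis of `ℝⁿ`. -/
def IsFullLattice {n : ℕ} (Λ : Set (Euc n)) : Prop :=
  ∃ b : Module.Basis (Fin n) ℝ (Euc n),
    Λ = {v : Euc n | ∃ m : Fin n → ℤ, v = ∑ i, (m i : ℝ) • b i}

/-- The Brillouin hyperplane `V_λ = {v : ‖v‖ = ‖v - λ‖}` (perpendicular bisector of `0` and `λ`). -/
def Bplane {n : ℕ} (lam : Euc n) : Set (Euc n) :=
  {v : Euc n | ‖v‖ = ‖v - lam‖}

/-- `μ(v) = #{λ ∈ Λ \ {0} : ‖v − λ‖ = ‖v‖}`. -/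
def mu {n : ℕ} (Λ : Set (Euc n)) (v : Euc n) : ℕ :=
  Set.ncard {lam : Euc n | lam ∈ Λ ∧ lam ≠ 0 ∧ ‖v - lam‖ = ‖v‖}

/-- The focal component `σ_i(Λ) = {v : μ(v) = i − 1}`. -/
def focalComp {n : ℕ} (Λ : Set (Euc n)) (i : ℕ) : Set (Euc n) :=
  {v : Euc n | mu Λ v = i - 1}

/-- The Brillouin set `B_k(Λ) = {v : #{λ ∈ Λ : ‖v − λ‖ ≤ ‖v‖} = k}` (here `λ = 0` is counted). -/
def brillouin {n : ℕ} (Λ : Set (Euc n)) (k : ℕ) : Set (Euc n) :=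
  {v : Euc n | Set.ncard {lam : Euc n | lam ∈ Λ ∧ ‖v - lam‖ ≤ ‖v‖} = k}

/-- `ι(v) = #{λ ∈ Λ \ {0} : V_λ meets the open segment from 0 to v}`. -/
def iota {n : ℕ} (Λ : Set (Euc n)) (v : Euc n) : ℕ :=
  Set.ncard {lam : Euc n | lam ∈ Λ ∧ lam ≠ 0 ∧
    ∃ t : ℝ, 0 < t ∧ t < 1 ∧ t • v ∈ Bplane lam}

lemma mem_bplane_iff {n : ℕ} (lam v : Euc n) :
    v ∈ Bplane lam ↔ (inner ℝ v lam : ℝ) = ‖lam‖ ^ 2 / 2 := by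
  have h2 : ‖v - lam‖ ^ 2 = ‖v‖ ^ 2 - 2 * (inner ℝ v lam : ℝ) + ‖lam‖ ^ 2 := norm_sub_sq_real v lam
  constructor
  · intro h
    have h3 : ‖v‖ = ‖v - lam‖ := h
    have h4 : ‖v‖ ^ 2 = ‖v - lam‖ ^ 2 := by rw [h3]
    linarith
  · intro h
    have h3 : ‖v - lam‖ ^ 2 = ‖v‖ ^ 2 := by rw [h2, h]; ring
    exact (sq_eq_sq₀ (norm_nonneg (v - lam)) (norm_nonneg v) |>.mp h3).symm

lemma isClosed_bplane {n : ℕ} (lam : Euc n) : IsClosed (Bplane lam) :=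
  isClosed_eq continuous_norm (Continuous.norm (by continuity))

lemma key {n : ℕ} (S : Set (Euc n)) (hS : S.Countable) (hS0 : ∀ μ ∈ S, μ ≠ 0)
    (lam : Euc n) (hlam : lam ≠ 0)
    (h : Bplane lam ⊆ ⋃ μ ∈ S, Bplane μ) : lam ∈ S := by
  classical
  set W : Submodule ℝ (Euc n) := (ℝ ∙ lam)ᗮ with hW
  haveI : S.Countable := hS
  haveI : Countable S := hS.to_subtype
  -- the covering sets
  set f : S → Set W := fun μ => {w : W | ((w : Euc n) + (2⁻¹ : ℝ) • lam) ∈ Bplane (μ : Euc n)}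
    with hf
  have hclosed : ∀ μ : S, IsClosed (f μ) := by
    intro μ
    exact (isClosed_bplane (μ : Euc n)).preimage (by continuity)
  have hmemlam : ∀ w : W, ((w : Euc n) + (2⁻¹ : ℝ) • lam) ∈ Bplane lam := by
    intro w
    rw [mem_bplane_iff]
    have hw : (inner ℝ (w : Euc n) lam : ℝ) = 0 := by
      have := (Submodule.mem_orthogonal (ℝ ∙ lam) (w : Euc n)).mp w.2 lam
        (Submodule.mem_span_singleton_self lam)
      rwa [real_inner_comm] at this
    rw [inner_add_left, real_inner_smul_left, hw, real_inner_self_eq_norm_sq]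
    ring
  have hcover : ⋃ μ : S, f μ = univ := by
    ext w
    simp only [mem_iUnion, mem_univ, iff_true]
    have := h (hmemlam w)
    simp only [mem_iUnion] at this
    obtain ⟨μ, hμS, hμ⟩ := this
    exact ⟨⟨μ, hμS⟩, hμ⟩
  obtain ⟨μ, w₀, hw₀⟩ := nonempty_interior_of_iUnion_of_closed hclosed hcover
  -- get a ball
  obtain ⟨ε, hε, hball⟩ := Metric.mem_nhds_iff.mp (mem_interior_iff_mem_nhds.mp hw₀)
  have hw₀f : w₀ ∈ f μ := interior_subset hw₀
  -- every u in W is orthogonal to μ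
  have horth : ∀ u : W, (inner ℝ (u : Euc n) (μ : Euc n) : ℝ) = 0 := by
    have hsmall : ∀ u : W, ‖u‖ < ε → (inner ℝ (u : Euc n) (μ : Euc n) : ℝ) = 0 := by
      intro u hu
      have : w₀ + u ∈ Metric.ball w₀ ε := by
        simp only [Metric.mem_ball, dist_eq_norm, add_sub_cancel_left]
        exact hu
      have h1 := hball this
      rw [hf, mem_setOf_eq, mem_bplane_iff] at h1 hw₀f
      have : ((w₀ + u : W) : Euc n) = (w₀ : Euc n) + (u : Euc n) := rfl
      rw [this] at h1
      rw [add_right_comm] at h1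
      rw [inner_add_left] at h1
      rw [hw₀f] at h1
      linarith
    intro u
    rcases eq_or_ne (u : Euc n) 0 with h0 | h0
    · simp [h0]
    · have hnu : (0:ℝ) < ‖u‖ := by
        simp only [norm_pos_iff]
        intro hc
        exact h0 (by rw [hc]; rfl)
      have := hsmall ((ε / (2 * ‖u‖)) • u) (by
        rw [norm_smul]
        rw [Real.norm_eq_abs, abs_of_pos (by positivity)]
        rw [div_mul_eq_mul_div]
        rw [div_lt_iff₀ (by positivity)]
        nlinarith)
      have hc : ((((ε / (2 * ‖u‖)) • u : W)) : Euc n) = (ε / (2 * ‖u‖)) • (u : Euc n) := rfl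
      rw [hc, real_inner_smul_left] at this
      have hne : ε / (2 * ‖u‖) ≠ 0 := ne_of_gt (div_pos hε (by linarith))
      exact (mul_eq_zero.mp this).resolve_left hne
  -- μ ∈ Wᗮ = span lam
  have hμW : (μ : Euc n) ∈ Wᗮ := by
    rw [Submodule.mem_orthogonal]
    intro u hu
    exact horth ⟨u, hu⟩
  rw [hW, Submodule.orthogonal_orthogonal] at hμW
  obtain ⟨t, ht⟩ := Submodule.mem_span_singleton.mp hμW
  -- compute t = 1
  rw [hf, mem_setOf_eq, mem_bplane_iff] at hw₀f
  have hw0orth : (inner ℝ (w₀ : Euc n) (μ : Euc n) : ℝ) = 0 := horth w₀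
  rw [inner_add_left, hw0orth, real_inner_smul_left] at hw₀f
  have hinner : (inner ℝ lam (μ : Euc n) : ℝ) = t * ‖lam‖^2 := by
    rw [← ht, real_inner_smul_right, real_inner_self_eq_norm_sq]
  have hnorm : ‖(μ : Euc n)‖^2 = t^2 * ‖lam‖^2 := by
    rw [← ht, norm_smul, mul_pow, Real.norm_eq_abs, sq_abs]
  have hlam2 : (0:ℝ) < ‖lam‖^2 := pow_pos (norm_pos_iff.mpr hlam) 2
  have hμ0 : (μ : Euc n) ≠ 0 := hS0 μ μ.2
  have ht0 : t ≠ 0 := by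
    intro hc; apply hμ0; rw [← ht, hc, zero_smul]
  have ht1 : t = 1 := by
    have heq : 2⁻¹ * (t * ‖lam‖^2) = t^2 * ‖lam‖^2 / 2 := by
      rw [← hinner, ← hnorm]; linarith [hw₀f]
    have h2 : t * ‖lam‖^2 = t^2 * ‖lam‖^2 := by linarith
    have h3 : t = t^2 := mul_right_cancel₀ (ne_of_gt hlam2) h2
    have h4 : t * (t - 1) = 0 := by nlinarith
    rcases mul_eq_zero.mp h4 with h5 | h5
    · exact absurd h5 ht0
    · linarith
  have : (μ : Euc n) = lam := by rw [← ht, ht1, one_smul]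
  rw [← this]
  exact μ.2

lemma IsFullLattice.countable {n : ℕ} {Λ : Set (Euc n)} (h : IsFullLattice Λ) :
    Λ.Countable := by
  obtain ⟨b, rfl⟩ := h
  have : {v : Euc n | ∃ m : Fin n → ℤ, v = ∑ i, (m i : ℝ) • b i}
      = Set.range (fun m : Fin n → ℤ => ∑ i, (m i : ℝ) • b i) := by
    ext v; simp [eq_comm]
  rw [this]
  exact countable_range _

lemma IsFullLattice.zero_mem {n : ℕ} {Λ : Set (Euc n)} (h : IsFullLattice Λ) :
    (0 : Euc n) ∈ Λ := by
  obtain ⟨b, rfl⟩ := h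
  exact ⟨0, by simp⟩

lemma image_bplane {n : ℕ} (A : Euc n ≃ₗᵢ[ℝ] Euc n) (lam : Euc n) :
    A '' Bplane lam = Bplane (A lam) := by
  ext v
  constructor
  · rintro ⟨w, hw, rfl⟩
    show ‖A w‖ = ‖A w - A lam‖
    rw [← map_sub, A.norm_map, A.norm_map]; exact hw
  · intro hv
    refine ⟨A.symm v, ?_, by simp⟩
    have : ‖v‖ = ‖v - A lam‖ := hv
    show ‖A.symm v‖ = ‖A.symm v - lam‖
    rw [show A.symm v - lam = A.symm (v - A lam) by simp [map_sub], A.symm.norm_map,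
      A.symm.norm_map]
    exact this

/-- If an orthogonal linear map `A ∈ O(n,ℝ)` maps the union of the Brillouin hyperplanes
of a full-rank lattice `Λ` onto the union of the Brillouin hyperplanes of a full-rank
lattice `Λ'`, then `Λ' = A(Λ)`. -/
theorem orthogonal_maps_bplanes_maps_lattice {n : ℕ}
    (Λ Λ' : Set (Euc n)) (hΛ : IsFullLattice Λ) (hΛ' : IsFullLattice Λ')
    (A : Euc n ≃ₗᵢ[ℝ] Euc n)
    (hA : A '' (⋃ lam ∈ {l : Euc n | l ∈ Λ ∧ l ≠ 0}, Bplane lam)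
        = ⋃ lam ∈ {l : Euc n | l ∈ Λ' ∧ l ≠ 0}, Bplane lam) :
    Λ' = A '' Λ := by
  have hΛc := hΛ.countable
  have hΛ'c := hΛ'.countable
  ext x
  constructor
  · intro hx
    rcases eq_or_ne x 0 with rfl | hx0
    · exact ⟨0, hΛ.zero_mem, map_zero A⟩
    · have h1 : Bplane x ⊆ ⋃ lam ∈ {l : Euc n | l ∈ Λ' ∧ l ≠ 0}, Bplane lam :=
        subset_biUnion_of_mem (u := Bplane) (show x ∈ {l : Euc n | l ∈ Λ' ∧ l ≠ 0} from ⟨hx, hx0⟩)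
      rw [← hA] at h1
      have h2 : Bplane (A.symm x) ⊆ ⋃ lam ∈ {l : Euc n | l ∈ Λ ∧ l ≠ 0}, Bplane lam := by
        intro v hv
        have hAv : A v ∈ Bplane x := by
          have : A v ∈ Bplane (A (A.symm x)) := by
            rw [← image_bplane A (A.symm x)]
            exact ⟨v, hv, rfl⟩
          rwa [A.apply_symm_apply] at this
        obtain ⟨w, hw, hw2⟩ := h1 hAv
        rwa [A.injective hw2] at hw
      have hs0 : A.symm x ≠ 0 := by
        intro hc
        apply hx0
        have := congrArg A hc
        rwa [A.apply_symm_apply, map_zero] at this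
      have hkey := key {l : Euc n | l ∈ Λ ∧ l ≠ 0}
        (hΛc.mono (fun l hl => hl.1)) (fun μ hμ => hμ.2) (A.symm x) hs0 h2
      exact ⟨A.symm x, hkey.1, A.apply_symm_apply x⟩
  · rintro ⟨y, hy, rfl⟩
    rcases eq_or_ne y 0 with rfl | hy0
    · rw [map_zero]; exact hΛ'.zero_mem
    · have h1 : Bplane y ⊆ ⋃ lam ∈ {l : Euc n | l ∈ Λ ∧ l ≠ 0}, Bplane lam :=
        subset_biUnion_of_mem (u := Bplane) (show y ∈ {l : Euc n | l ∈ Λ ∧ l ≠ 0} from ⟨hy, hy0⟩)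
      have h2 : Bplane (A y) ⊆ ⋃ lam ∈ {l : Euc n | l ∈ Λ' ∧ l ≠ 0}, Bplane lam := by
        rw [← image_bplane A y, ← hA]
        exact image_mono h1
      have hAy0 : A y ≠ 0 := by
        intro hc
        exact hy0 (by simpa using A.injective (by simpa using hc))
      have hkey := key {l : Euc n | l ∈ Λ' ∧ l ≠ 0}
        (hΛ'c.mono (fun l hl => hl.1)) (fun μ hμ => hμ.2) (A y) hAy0 h2
      exact hkey.1
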